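/- (Lewandowski–Szynal inequality.) Let $\alpha \geq -1/2$, $x \geq 0$, and $n \in \mathbb{Z}_{\geq 0}$. Then $\left|L_n^{(\alpha)}(x)\right| \leq \dfrac{(\alpha+1)_n}{n!}\,\sigma_n^{(\alpha)}(e^x)$, where $\sigma_n^{(\alpha)}(e^x) := \dfrac{n!}{(\alpha+1)_n}\sum_{m=0}^{n}\dfrac{(\alpha+1)_{n-m}}{(n-m)!}\dfrac{x^m}{m!}$; equivalently, $\left|L_n^{(\alpha)}(x)\right| \leq \sum_{m=0}^{n}\dfrac{(\alpha+1)_{n-m}}{(n-m)!}\dfrac{x^m}{m!}$. -/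

import Mathlib

open scoped BigOperators
open MeasureTheory

/-- The rising factorial (Pochhammer symbol) `(a)_m = a (a+1) ⋯ (a+m-1)`. -/
noncomputable def risingFactorial (a : ℝ) (m : ℕ) : ℝ := (ascPochhammer ℝ m).eval a

/-- The classical Laguerre polynomial `L_n^{(α)}(x)`. -/
noncomputable def laguerreP (n : ℕ) (α : ℝ) (x : ℝ) : ℝ :=
  risingFactorial (α + 1) n / (Nat.factorial n : ℝ) *
    ∑ j ∈ Finset.range (n + 1),
      risingFactorial (-(n : ℝ)) j / risingFactorial (α + 1) j * x ^ j / (Nat.factorial j : ℝ)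

/-- Erdélyi's multivariate Laguerre polynomial `L_{n_1,…,n_k}^{(α)}(x_1,…,x_k)`. -/
noncomputable def mvLaguerre (k : ℕ) (α : ℝ) (n : Fin k → ℕ) (x : Fin k → ℝ) : ℝ :=
  risingFactorial (α + 1) (∑ i, n i) / (∏ i, (Nat.factorial (n i) : ℝ)) *
    ∑ j ∈ Fintype.piFinset (fun i => Finset.range (n i + 1)),
      (∏ i, risingFactorial (-(n i : ℝ)) (j i)) / risingFactorial (α + 1) (∑ i, j i) *
        ∏ i, x i ^ (j i) / (Nat.factorial (j i) : ℝ)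

/-- The confluent Lauricella function `Φ₂^{(k)}[b₁,…,b_k; c; x₁,…,x_k]`. -/
noncomputable def Phi2 (k : ℕ) (b : Fin k → ℝ) (c : ℝ) (x : Fin k → ℝ) : ℝ :=
  ∑' j : Fin k → ℕ,
    (∏ i, risingFactorial (b i) (j i)) / risingFactorial c (∑ i, j i) *
      ∏ i, x i ^ (j i) / (Nat.factorial (j i) : ℝ)

/-- The confluent hypergeometric function `₁F₁[a; c; x]`. -/
noncomputable def oneF1 (a c x : ℝ) : ℝ :=
  ∑' j : ℕ, risingFactorial a j / risingFactorial c j * x ^ j / (Nat.factorial j : ℝ)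

/-- Rooney's constant `q_n = √((2n)!) / (2^{n+1/2} n!)`. -/
noncomputable def qSeq (n : ℕ) : ℝ :=
  Real.sqrt (Nat.factorial (2 * n) : ℝ) /
    ((2 : ℝ) ^ ((n : ℝ) + 1 / 2) * (Nat.factorial n : ℝ))

/-- The open standard simplex `E_k ⊆ ℝ^k`. -/
def simplexE (k : ℕ) : Set (Fin k → ℝ) := {u | (∀ i, 0 < u i) ∧ ∑ i, u i < 1}

/-- The density of the Dirichlet measure `μ_{(b₁,…,b_k,β)}` with respect to
Lebesgue measure on the simplex `E_k`. -/
noncomputable def dirichletDensity (k : ℕ) (b : Fin k → ℝ) (β : ℝ) (u : Fin k → ℝ) : ℝ :=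
  Real.Gamma (∑ i, b i + β) / ((∏ i, Real.Gamma (b i)) * Real.Gamma β) *
    (∏ i, u i ^ (b i - 1)) * (1 - ∑ i, u i) ^ (β - 1)


namespace LSaux

open Finset Complex MeasureTheory

lemma rf_zero (a : ℝ) : risingFactorial a 0 = 1 := by simp [risingFactorial]

lemma rf_succ (a : ℝ) (k : ℕ) :
    risingFactorial a (k + 1) = risingFactorial a k * (a + k) := by
  simp [risingFactorial, ascPochhammer_succ_eval]

lemma rf_nonneg {a : ℝ} (ha : 0 ≤ a) (k : ℕ) : 0 ≤ risingFactorial a k := by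
  induction k with
  | zero => simp [rf_zero]
  | succ k ih => rw [rf_succ]; exact mul_nonneg ih (by positivity)

lemma rf_pos {a : ℝ} (ha : 0 < a) (k : ℕ) : 0 < risingFactorial a k := by
  induction k with
  | zero => simp [rf_zero]
  | succ k ih => rw [rf_succ]; exact mul_pos ih (by positivity)

lemma rf_add (a : ℝ) (m k : ℕ) :
    risingFactorial a (m + k) = risingFactorial a m * risingFactorial (a + m) k := by
  have h := congrArg (Polynomial.eval a) (ascPochhammer_mul (S := ℝ) m k)
  simpa [risingFactorial, Polynomial.eval_mul, Polynomial.eval_comp] using h.symm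

lemma rf_neg (j d : ℕ) :
    risingFactorial (-((j + d : ℕ) : ℝ)) j * (Nat.factorial d : ℝ)
      = (-1) ^ j * (Nat.factorial (j + d) : ℝ) := by
  induction j generalizing d with
  | zero => simp [rf_zero]
  | succ j ih =>
    have h := ih (d + 1)
    rw [rf_succ]
    have e1 : (-((j + 1 + d : ℕ) : ℝ)) = (-((j + (d + 1) : ℕ) : ℝ)) := by push_cast; ring
    have e2 : (j + 1 + d) = (j + (d + 1)) := by omega
    rw [e1, e2]
    have e3 : ((Nat.factorial (d+1) : ℝ)) = (d + 1) * (Nat.factorial d : ℝ) := by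
      rw [Nat.factorial_succ]; push_cast; ring
    rw [e3] at h
    push_cast at h ⊢
    linear_combination (-1 : ℝ) * h

lemma vand (a b : ℝ) : ∀ N : ℕ,
    ∑ i ∈ range (N + 1), (N.choose i : ℝ) * risingFactorial a i * risingFactorial b (N - i)
      = risingFactorial (a + b) N
  | 0 => by simp [risingFactorial]
  | (N + 1) => by
    rw [rf_succ, ← vand a b N, Finset.sum_mul]
    rw [Finset.sum_range_succ' (fun i => ((N+1).choose i : ℝ) * risingFactorial a i * risingFactorial b (N + 1 - i))]
    have h0 : ((N+1).choose 0 : ℝ) * risingFactorial a 0 * risingFactorial b (N + 1 - 0)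
        = risingFactorial b N * (b + N) := by
      simp [risingFactorial, ascPochhammer_succ_eval]
    rw [h0]
    have hsplit : ∀ i ∈ range (N + 1),
        (((N+1).choose (i+1) : ℝ) * risingFactorial a (i+1) * risingFactorial b (N + 1 - (i+1)))
          = ((N.choose i : ℝ) * risingFactorial a i * risingFactorial b (N - i)) * (a + i)
            + ((N.choose (i+1) : ℝ) * risingFactorial a (i+1) * risingFactorial b (N - i)) := by
      intro i hi
      rw [mem_range] at hi
      have : N + 1 - (i+1) = N - i := by omega
      rw [this, Nat.choose_succ_succ, rf_succ]
      push_cast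
      ring
    rw [Finset.sum_congr rfl hsplit, Finset.sum_add_distrib]
    -- second piece: reindex
    have hsec : ∑ i ∈ range (N + 1),
        ((N.choose (i+1) : ℝ) * risingFactorial a (i+1) * risingFactorial b (N - i))
        = ∑ i ∈ range (N + 1),
          ((N.choose i : ℝ) * risingFactorial a i * risingFactorial b (N - i)) * (b + (N - i : ℕ))
          - risingFactorial b N * (b + N) := by
      rw [Finset.sum_range_succ (fun i => (N.choose (i+1) : ℝ) * risingFactorial a (i+1) * risingFactorial b (N - i))]
      rw [Finset.sum_range_succ' (fun i => ((N.choose i : ℝ) * risingFactorial a i * risingFactorial b (N - i)) * (b + (N - i : ℕ)))]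
      simp only [Nat.choose_succ_self, Nat.cast_zero, zero_mul, add_zero, Nat.choose_zero_right,
        Nat.cast_one, one_mul, Nat.sub_zero]
      have : ∀ i ∈ range N,
          ((N.choose (i+1) : ℝ) * risingFactorial a (i+1) * risingFactorial b (N - i))
          = ((N.choose (i+1) : ℝ) * risingFactorial a (i+1) * risingFactorial b (N - (i+1))) * (b + (N - (i+1) : ℕ)) := by
        intro i hi
        rw [mem_range] at hi
        have h1 : N - i = (N - (i+1)) + 1 := by omega
        rw [h1, rf_succ b (N - (i+1))]
        ring
      rw [Finset.sum_congr rfl this]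
      simp [risingFactorial]
    rw [hsec]
    have hfin : ∀ i ∈ range (N + 1),
        ((N.choose i : ℝ) * risingFactorial a i * risingFactorial b (N - i)) * (a + i)
        + ((N.choose i : ℝ) * risingFactorial a i * risingFactorial b (N - i)) * (b + (N - i : ℕ))
        = ((N.choose i : ℝ) * risingFactorial a i * risingFactorial b (N - i)) * (a + b + N) := by
      intro i hi
      rw [mem_range] at hi
      have : ((N - i : ℕ) : ℝ) = (N : ℝ) - i := by
        rw [Nat.cast_sub (by omega)]
      rw [this]; ring
    rw [← Finset.sum_congr rfl hfin, Finset.sum_add_distrib]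
    ring

lemma tri (G : ℕ → ℕ → ℝ) : ∀ n : ℕ,
    ∑ k ∈ range (n + 1), ∑ m ∈ range (k + 1), G k m
      = ∑ m ∈ range (n + 1), ∑ i ∈ range (n + 1 - m), G (m + i) m
  | 0 => by simp
  | (n + 1) => by
    rw [Finset.sum_range_succ (fun k => ∑ m ∈ range (k + 1), G k m), tri G n]
    rw [Finset.sum_range_succ (fun m => ∑ i ∈ range (n + 2 - m), G (m + i) m)]
    have h1 : ∀ m ∈ range (n + 1),
        ∑ i ∈ range (n + 2 - m), G (m + i) m
          = ∑ i ∈ range (n + 1 - m), G (m + i) m + G (n + 1) m := by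
      intro m hm
      rw [mem_range] at hm
      have e : n + 2 - m = (n + 1 - m) + 1 := by omega
      rw [e, Finset.sum_range_succ]
      congr 2
      omega
    rw [Finset.sum_congr rfl h1, Finset.sum_add_distrib]
    have : n + 2 - (n + 1) = 1 := by omega
    rw [this]
    rw [Finset.sum_range_succ (fun m => G (n+1) m) (n+1)]
    simp [add_assoc]

lemma sum_range_even (f : ℕ → ℝ) (hf : ∀ k, Odd k → f k = 0) : ∀ n : ℕ,
    ∑ k ∈ range (2 * n + 1), f k = ∑ j ∈ range (n + 1), f (2 * j)
  | 0 => by simp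
  | (n + 1) => by
    have e : 2 * (n + 1) + 1 = (2 * n + 1) + 1 + 1 := by omega
    rw [e, Finset.sum_range_succ, Finset.sum_range_succ, sum_range_even f hf n,
      hf (2 * n + 1) ⟨n, by omega⟩]
    conv_rhs => rw [Finset.sum_range_succ]
    have : 2 * n + 1 + 1 = 2 * (n + 1) := by omega
    rw [this]
    ring

lemma re_pow (a b : ℝ) (n : ℕ) :
    (((b : ℂ) * Complex.I + (a : ℂ)) ^ (2 * n)).re
      = ∑ j ∈ range (n + 1), (-1) ^ j * (((2 * n).choose (2 * j) : ℝ)) * a ^ (2 * n - 2 * j) * b ^ (2 * j) := by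
  rw [add_pow, Complex.re_sum]
  rw [sum_range_even (fun k => ((((b:ℂ) * Complex.I) ^ k * (a:ℂ) ^ (2*n - k) * ((2*n).choose k : ℂ)).re)) ?_ n]
  · apply Finset.sum_congr rfl
    intro j hj
    have hI : (Complex.I) ^ (2 * j) = ((-1 : ℂ)) ^ j := by
      rw [pow_mul, Complex.I_sq]
    rw [mul_pow, hI]
    have : ((b:ℂ)) ^ (2*j) * (-1:ℂ) ^ j * (a:ℂ) ^ (2*n - 2*j) * ((2*n).choose (2*j) : ℂ)
        = (((-1:ℝ)) ^ j * (((2 * n).choose (2 * j) : ℝ)) * a ^ (2 * n - 2 * j) * b ^ (2 * j) : ℝ) := by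
      push_cast
      ring
    rw [this, Complex.ofReal_re]
  · intro k ⟨j, hk⟩
    subst hk
    show (((b:ℂ) * Complex.I) ^ (2*j+1) * (a:ℂ) ^ (2*n - (2*j+1)) * (((2*n).choose (2*j+1)) : ℂ)).re = 0
    have hI : (Complex.I) ^ (2 * j + 1) = ((-1 : ℂ)) ^ j * Complex.I := by
      rw [pow_succ, pow_mul, Complex.I_sq]
    rw [mul_pow, hI]
    have : ((b:ℂ)) ^ (2*j+1) * ((-1:ℂ) ^ j * Complex.I) * (a:ℂ) ^ (2*n - (2*j+1)) * ((2*n).choose (2*j+1) : ℂ)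
        = (((-1:ℝ)) ^ j * b ^ (2*j+1) * a ^ (2*n - (2*j+1)) * (((2*n).choose (2*j+1) : ℝ)) : ℝ) * Complex.I := by
      push_cast
      ring
    rw [this, Complex.mul_I_re, Complex.ofReal_im, neg_zero]

lemma abs_P_le (u x : ℝ) (hu : 0 ≤ u) (hx : 0 ≤ x) (n : ℕ) :
    |∑ j ∈ range (n + 1), (-1) ^ j * (((2 * n).choose (2 * j) : ℝ)) * u ^ (n - j) * x ^ j|
      ≤ (u + x) ^ n := by
  set a := Real.sqrt u
  set b := Real.sqrt x
  have ha2 : a ^ 2 = u := Real.sq_sqrt hu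
  have hb2 : b ^ 2 = x := Real.sq_sqrt hx
  have key : ∑ j ∈ range (n + 1), (-1) ^ j * (((2 * n).choose (2 * j) : ℝ)) * u ^ (n - j) * x ^ j
      = (((b : ℂ) * Complex.I + (a : ℂ)) ^ (2 * n)).re := by
    rw [re_pow]
    apply Finset.sum_congr rfl
    intro j hj
    rw [mem_range] at hj
    have e1 : a ^ (2 * n - 2 * j) = u ^ (n - j) := by
      have : 2 * n - 2 * j = 2 * (n - j) := by omega
      rw [this, pow_mul, ha2]
    have e2 : b ^ (2 * j) = x ^ j := by rw [pow_mul, hb2]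
    rw [e1, e2]
  rw [key]
  calc |(((b : ℂ) * Complex.I + (a : ℂ)) ^ (2 * n)).re|
      ≤ ‖(((b : ℂ) * Complex.I + (a : ℂ)) ^ (2 * n))‖ := Complex.abs_re_le_norm _
    _ = (‖((b : ℂ) * Complex.I + (a : ℂ))‖) ^ (2 * n) := by rw [norm_pow]
    _ = ((‖((b : ℂ) * Complex.I + (a : ℂ))‖) ^ 2) ^ n := by rw [← pow_mul]
    _ = (u + x) ^ n := by
        rw [Complex.sq_norm]
        congr 1
        simp [Complex.normSq_apply]
        nlinarith [ha2, hb2]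

lemma rf_half : ∀ m : ℕ,
    risingFactorial (1/2 : ℝ) m * (4 ^ m * (Nat.factorial m : ℝ)) = (Nat.factorial (2 * m) : ℝ)
  | 0 => by simp [rf_zero]
  | (m + 1) => by
    have ih := rf_half m
    have e : 2 * (m + 1) = (2 * m + 1) + 1 := by omega
    rw [e, rf_succ, Nat.factorial_succ, Nat.factorial_succ, Nat.factorial_succ, pow_succ]
    push_cast
    linear_combination ((1/2 + (m:ℝ)) * 4 * ((m:ℝ) + 1)) * ih

lemma Gamma_half : ∀ k : ℕ,
    Real.Gamma ((k : ℝ) + 1/2) = risingFactorial (1/2) k * Real.Gamma (1/2)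
  | 0 => by simp [rf_zero]
  | (k + 1) => by
    have e : ((k + 1 : ℕ) : ℝ) + 1/2 = ((k : ℝ) + 1/2) + 1 := by push_cast; ring
    rw [e, Real.Gamma_add_one (by positivity), Gamma_half k, rf_succ]
    ring

lemma GammaInt (k : ℕ) :
    ∫ u in Set.Ioi (0:ℝ), Real.exp (-u) * u ^ ((k:ℝ) - 1/2) = Real.Gamma ((k:ℝ) + 1/2) := by
  rw [Real.Gamma_eq_integral (by positivity)]
  have e : (k:ℝ) + 1/2 - 1 = (k:ℝ) - 1/2 := by ring
  rw [e]

lemma intOn (k : ℕ) :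
    MeasureTheory.IntegrableOn (fun u : ℝ => Real.exp (-u) * u ^ ((k:ℝ) - 1/2))
      (Set.Ioi 0) MeasureTheory.volume := by
  have h := Real.GammaIntegral_convergent (s := (k:ℝ) + 1/2) (by positivity)
  have e : (k:ℝ) + 1/2 - 1 = (k:ℝ) - 1/2 := by ring
  rwa [e] at h

lemma laguerre_eq (n : ℕ) (α : ℝ) (hα : 0 < α + 1) (x : ℝ) :
    laguerreP n α x = ∑ m ∈ Finset.range (n + 1),
      (-1) ^ m * (risingFactorial (α + 1 + m) (n - m) / ((Nat.factorial (n - m)) : ℝ))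
        * (x ^ m / ((Nat.factorial m) : ℝ)) := by
  unfold laguerreP
  rw [Finset.mul_sum]
  apply Finset.sum_congr rfl
  intro j hj
  rw [mem_range] at hj
  have hj' : j ≤ n := by omega
  have h1 : risingFactorial (α + 1) n
      = risingFactorial (α + 1) j * risingFactorial (α + 1 + j) (n - j) := by
    have h := rf_add (α + 1) j (n - j)
    rwa [Nat.add_sub_cancel' hj'] at h
  have h2 : risingFactorial (-(n : ℝ)) j * ((Nat.factorial (n - j)) : ℝ)
      = (-1) ^ j * ((Nat.factorial n) : ℝ) := by
    have h := rf_neg j (n - j)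
    rwa [Nat.add_sub_cancel' hj'] at h
  have hp : risingFactorial (α + 1) j ≠ 0 := ne_of_gt (rf_pos hα j)
  have hf1 : ((Nat.factorial n) : ℝ) ≠ 0 := by positivity
  have hf2 : ((Nat.factorial (n - j)) : ℝ) ≠ 0 := by positivity
  have hf3 : ((Nat.factorial j) : ℝ) ≠ 0 := by positivity
  have h2' : risingFactorial (-(n : ℝ)) j
      = ((-1) ^ j * ((Nat.factorial n) : ℝ)) / ((Nat.factorial (n - j)) : ℝ) :=
    (eq_div_iff hf2).mpr h2
  rw [h1, h2']
  field_simp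

lemma I1 {m n : ℕ} (hm : m ≤ n) :
    risingFactorial ((m:ℝ) + 1/2) (n - m) * (Nat.factorial n : ℝ)
      = ((2*n).choose (2*m) : ℝ) * risingFactorial (1/2) (n - m)
          * (Nat.factorial (n - m) : ℝ) * (Nat.factorial m : ℝ) := by
  have hm' := rf_half m
  have hn' := rf_half n
  have hnm' := rf_half (n - m)
  have hadd : risingFactorial (1/2 : ℝ) m * risingFactorial ((m:ℝ) + 1/2) (n - m)
      = risingFactorial (1/2 : ℝ) n := by
    have h := rf_add (1/2) m (n - m)
    rw [Nat.add_sub_cancel' hm] at h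
    rw [add_comm (1/2 : ℝ) (m:ℝ)] at h
    exact h.symm
  have hch : ((2*n).choose (2*m) : ℝ) * (Nat.factorial (2*m) : ℝ) * (Nat.factorial (2*(n-m)) : ℝ)
      = (Nat.factorial (2*n) : ℝ) := by
    have h := Nat.choose_mul_factorial_mul_factorial (show 2*m ≤ 2*n by omega)
    have e : 2*n - 2*m = 2*(n-m) := by omega
    rw [e] at h
    exact_mod_cast congrArg (Nat.cast (R := ℝ)) h
  have hpow : (4:ℝ)^n = 4^m * 4^(n-m) := by
    rw [← pow_add]; congr 1; omega
  have hA4 : risingFactorial (1/2 : ℝ) m * (4:ℝ)^n ≠ 0 := by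
    have := rf_pos (show (0:ℝ) < 1/2 by norm_num) m
    positivity
  apply mul_left_cancel₀ hA4
  have L : risingFactorial (1/2:ℝ) m * (4:ℝ)^n
      * (risingFactorial ((m:ℝ) + 1/2) (n - m) * (Nat.factorial n : ℝ))
      = (Nat.factorial (2*n) : ℝ) := by
    linear_combination ((4:ℝ)^n * (Nat.factorial n : ℝ)) * hadd + hn'
  have R : risingFactorial (1/2:ℝ) m * (4:ℝ)^n
      * (((2*n).choose (2*m) : ℝ) * risingFactorial (1/2) (n - m)
          * (Nat.factorial (n - m) : ℝ) * (Nat.factorial m : ℝ))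
      = (Nat.factorial (2*n) : ℝ) := by
    linear_combination
      (risingFactorial (1/2:ℝ) m * ((2*n).choose (2*m) : ℝ) * risingFactorial (1/2) (n - m)
        * (Nat.factorial (n - m) : ℝ) * (Nat.factorial m : ℝ)) * hpow
      + (((2*n).choose (2*m) : ℝ) * risingFactorial (1/2) (n-m) * (4:ℝ)^(n-m) * (Nat.factorial (n-m):ℝ)) * hm'
      + (((2*n).choose (2*m) : ℝ) * (Nat.factorial (2*m):ℝ)) * hnm'
      + hch
  rw [L, R]

lemma base (n : ℕ) (x : ℝ) (hx : 0 ≤ x) :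
    |laguerreP n (-(1/2)) x| ≤ ∑ m ∈ Finset.range (n + 1),
      risingFactorial (1/2) (n - m) / ((Nat.factorial (n - m)) : ℝ)
        * (x ^ m / ((Nat.factorial m) : ℝ)) := by
  have hΓ : 0 < Real.Gamma (1/2) := Real.Gamma_pos_of_pos (by norm_num)
  have hnf : (0:ℝ) < (Nat.factorial n : ℝ) := by positivity
  set f : ℝ → ℝ := fun u => ∑ m ∈ Finset.range (n + 1),
    ((-1:ℝ) ^ m * ((2*n).choose (2*m) : ℝ) * x ^ m)
      * (Real.exp (-u) * u ^ (((n - m : ℕ):ℝ) - 1/2)) with hf_def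
  set g : ℝ → ℝ := fun u => ∑ m ∈ Finset.range (n + 1),
    ((n.choose m : ℝ) * x ^ m) * (Real.exp (-u) * u ^ (((n - m : ℕ):ℝ) - 1/2)) with hg_def
  have hfint : ∀ m ∈ Finset.range (n+1), Integrable
      (fun u : ℝ => ((-1:ℝ) ^ m * ((2*n).choose (2*m) : ℝ) * x ^ m)
        * (Real.exp (-u) * u ^ (((n - m : ℕ):ℝ) - 1/2))) (volume.restrict (Set.Ioi 0)) :=
    fun m _ => (intOn (n - m)).const_mul _
  have hgint : ∀ m ∈ Finset.range (n+1), Integrable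
      (fun u : ℝ => ((n.choose m : ℝ) * x ^ m)
        * (Real.exp (-u) * u ^ (((n - m : ℕ):ℝ) - 1/2))) (volume.restrict (Set.Ioi 0)) :=
    fun m _ => (intOn (n - m)).const_mul _
  -- Step A : L * (n! * Γ(1/2)) = ∫ f
  have hA : laguerreP n (-(1/2)) x * ((Nat.factorial n : ℝ) * Real.Gamma (1/2))
      = ∫ u in Set.Ioi (0:ℝ), f u := by
    rw [hf_def]
    rw [integral_finset_sum _ hfint]
    rw [laguerre_eq n (-(1/2)) (by norm_num) x, Finset.sum_mul]
    apply Finset.sum_congr rfl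
    intro m hm
    rw [mem_range] at hm
    have hm' : m ≤ n := by omega
    rw [integral_const_mul, GammaInt (n - m), Gamma_half (n - m)]
    have e : (-(1/2) + 1 + (m:ℝ)) = ((m:ℝ) + 1/2) := by ring
    rw [e]
    have h := I1 hm'
    have hf2 : ((Nat.factorial (n - m)) : ℝ) ≠ 0 := by positivity
    have hf3 : ((Nat.factorial m) : ℝ) ≠ 0 := by positivity
    set A := risingFactorial ((m:ℝ) + 1/2) (n - m) with hA_def
    set B := risingFactorial (1/2 : ℝ) (n - m) with hB_def
    field_simp
    linear_combination (x^m) * h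
  -- Step B : pointwise bound ‖f u‖ ≤ g u on Ioi 0
  have hpt : ∀ᵐ u ∂(volume.restrict (Set.Ioi (0:ℝ))), ‖f u‖ ≤ g u := by
    rw [MeasureTheory.ae_restrict_iff' measurableSet_Ioi]
    refine MeasureTheory.ae_of_all _ (fun u hu => ?_)
    have hu0 : (0:ℝ) < u := hu
    have hrw : ∀ m, m ∈ Finset.range (n+1) →
        u ^ (((n - m : ℕ):ℝ) - 1/2) = u ^ ((n - m : ℕ)) * u ^ (-(1/2) : ℝ) := by
      intro m _
      rw [show (((n - m : ℕ):ℝ) - 1/2) = ((n - m : ℕ):ℝ) + (-(1/2)) from by ring,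
        Real.rpow_add hu0, Real.rpow_natCast]
    have hf1 : f u = (∑ m ∈ Finset.range (n+1),
        (-1:ℝ) ^ m * ((2*n).choose (2*m) : ℝ) * u ^ (n - m) * x ^ m)
          * (Real.exp (-u) * u ^ (-(1/2) : ℝ)) := by
      rw [hf_def, Finset.sum_mul]
      apply Finset.sum_congr rfl
      intro m hm
      rw [hrw m hm]
      ring
    have hg1 : g u = (u + x) ^ n * (Real.exp (-u) * u ^ (-(1/2) : ℝ)) := by
      rw [hg_def]
      have hbin : (u + x) ^ n = ∑ m ∈ Finset.range (n+1), (n.choose m : ℝ) * x ^ m * u ^ (n - m) := by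
        rw [add_comm u x, add_pow]
        apply Finset.sum_congr rfl
        intro m hm
        ring
      rw [hbin, Finset.sum_mul]
      apply Finset.sum_congr rfl
      intro m hm
      rw [hrw m hm]
      ring
    rw [hf1, hg1, Real.norm_eq_abs, abs_mul]
    have h2 : |Real.exp (-u) * u ^ (-(1/2) : ℝ)| = Real.exp (-u) * u ^ (-(1/2) : ℝ) := by
      apply _root_.abs_of_nonneg
      positivity
    rw [h2]
    apply mul_le_mul_of_nonneg_right (abs_P_le u x hu0.le hx n)
    positivity
  -- Step C : value of ∫ g
  have hC : ∫ u in Set.Ioi (0:ℝ), g u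
      = ∑ m ∈ Finset.range (n+1), ((n.choose m : ℝ) * x ^ m)
          * (risingFactorial (1/2) (n - m) * Real.Gamma (1/2)) := by
    rw [hg_def, integral_finset_sum _ hgint]
    apply Finset.sum_congr rfl
    intro m hm
    rw [integral_const_mul, GammaInt (n - m), Gamma_half (n - m)]
  -- Step D : combine
  have hD : |laguerreP n (-(1/2)) x| * ((Nat.factorial n : ℝ) * Real.Gamma (1/2))
      ≤ (∑ m ∈ Finset.range (n + 1),
          risingFactorial (1/2) (n - m) / ((Nat.factorial (n - m)) : ℝ)
            * (x ^ m / ((Nat.factorial m) : ℝ))) * ((Nat.factorial n : ℝ) * Real.Gamma (1/2)) := by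
    have e1 : |laguerreP n (-(1/2)) x| * ((Nat.factorial n : ℝ) * Real.Gamma (1/2))
        = |laguerreP n (-(1/2)) x * ((Nat.factorial n : ℝ) * Real.Gamma (1/2))| := by
      rw [abs_mul, abs_of_pos (mul_pos hnf hΓ)]
    have hgInt : Integrable g (volume.restrict (Set.Ioi (0:ℝ))) := by
      rw [hg_def]
      exact integrable_finset_sum _ hgint
    rw [e1, hA]
    calc |∫ u in Set.Ioi (0:ℝ), f u| ≤ ∫ u in Set.Ioi (0:ℝ), g u := by
          have h := MeasureTheory.norm_integral_le_of_norm_le hgInt hpt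
          rwa [Real.norm_eq_abs] at h
      _ = _ := by
          rw [hC, Finset.sum_mul]
          apply Finset.sum_congr rfl
          intro m hm
          rw [mem_range] at hm
          have hm' : m ≤ n := by omega
          have hch : ((n.choose m : ℕ) : ℝ) * (Nat.factorial m : ℝ) * (Nat.factorial (n - m) : ℝ)
              = (Nat.factorial n : ℝ) := by
            exact_mod_cast congrArg (Nat.cast (R := ℝ))
              (Nat.choose_mul_factorial_mul_factorial hm')
          have hf2 : ((Nat.factorial (n - m)) : ℝ) ≠ 0 := by positivity
          have hf3 : ((Nat.factorial m) : ℝ) ≠ 0 := by positivity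
          field_simp
          linear_combination (risingFactorial (1/2) (n-m) * x ^ m) * hch
  exact le_of_mul_le_mul_right hD (mul_pos hnf hΓ)

lemma vandC (a b : ℝ) (N : ℕ) :
    ∑ i ∈ range (N + 1),
        (risingFactorial a i / (Nat.factorial i : ℝ))
          * (risingFactorial b (N - i) / (Nat.factorial (N - i) : ℝ))
      = risingFactorial (a + b) N / (Nat.factorial N : ℝ) := by
  rw [← vand a b N, Finset.sum_div]
  apply Finset.sum_congr rfl
  intro i hi
  rw [mem_range] at hi
  have hi' : i ≤ N := by omega
  rw [Nat.cast_choose ℝ hi']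
  have h1 : (Nat.factorial i : ℝ) ≠ 0 := by positivity
  have h2 : (Nat.factorial (N - i) : ℝ) ≠ 0 := by positivity
  have h3 : (Nat.factorial N : ℝ) ≠ 0 := by positivity
  field_simp

lemma connection (n : ℕ) (α : ℝ) (hα : 0 < α + 1) (x : ℝ) :
    laguerreP n α x = ∑ k ∈ range (n + 1),
      risingFactorial (α + 1/2) (n - k) / (Nat.factorial (n - k) : ℝ)
        * laguerreP k (-(1/2)) x := by
  have hR : ∀ k ∈ range (n + 1),
      risingFactorial (α + 1/2) (n - k) / (Nat.factorial (n - k) : ℝ) * laguerreP k (-(1/2)) x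
        = ∑ m ∈ range (k + 1),
          (risingFactorial (α + 1/2) (n - k) / (Nat.factorial (n - k) : ℝ))
            * ((-1) ^ m * (risingFactorial (-(1/2) + 1 + m) (k - m) / ((Nat.factorial (k - m)) : ℝ))
              * (x ^ m / ((Nat.factorial m) : ℝ))) := by
    intro k _
    rw [laguerre_eq k (-(1/2)) (by norm_num) x, Finset.mul_sum]
  rw [Finset.sum_congr rfl hR,
    tri (fun k m => (risingFactorial (α + 1/2) (n - k) / (Nat.factorial (n - k) : ℝ))
      * ((-1) ^ m * (risingFactorial (-(1/2) + 1 + m) (k - m) / ((Nat.factorial (k - m)) : ℝ))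
        * (x ^ m / ((Nat.factorial m) : ℝ)))) n,
    laguerre_eq n α hα x]
  apply Finset.sum_congr rfl
  intro m hm
  rw [mem_range] at hm
  have hm' : m ≤ n := by omega
  have e1 : n + 1 - m = (n - m) + 1 := by omega
  rw [e1]
  have e2 : ∀ i ∈ range ((n - m) + 1),
      (fun (k m' : ℕ) => (risingFactorial (α + 1/2) (n - k) / (Nat.factorial (n - k) : ℝ))
        * ((-1) ^ m' * (risingFactorial (-(1/2) + 1 + (m' : ℝ)) (k - m') / ((Nat.factorial (k - m')) : ℝ))
          * (x ^ m' / ((Nat.factorial m') : ℝ)))) (m + i) m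
      = ((-1) ^ m * (x ^ m / ((Nat.factorial m) : ℝ)))
        * ((risingFactorial (-(1/2) + 1 + m) i / (Nat.factorial i : ℝ))
          * (risingFactorial (α + 1/2) ((n - m) - i) / (Nat.factorial ((n - m) - i) : ℝ))) := by
    intro i hi
    beta_reduce
    have e3 : m + i - m = i := by omega
    have e4 : n - (m + i) = (n - m) - i := by omega
    rw [e3, e4]
    ring
  rw [Finset.sum_congr rfl e2, ← Finset.mul_sum, vandC (-(1/2) + 1 + m) (α + 1/2) (n - m)]
  have e5 : (-(1/2) + 1 + (m:ℝ)) + (α + 1/2) = α + 1 + m := by ring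
  rw [e5]
  ring

lemma G2 (n : ℕ) (α : ℝ) (x : ℝ) :
    ∑ k ∈ range (n + 1),
        (risingFactorial (α + 1/2) (n - k) / (Nat.factorial (n - k) : ℝ))
          * (∑ m ∈ range (k + 1),
            risingFactorial (1/2) (k - m) / ((Nat.factorial (k - m)) : ℝ)
              * (x ^ m / ((Nat.factorial m) : ℝ)))
      = ∑ m ∈ range (n + 1),
          risingFactorial (α + 1) (n - m) / ((Nat.factorial (n - m)) : ℝ)
            * (x ^ m / ((Nat.factorial m) : ℝ)) := by
  have hR : ∀ k ∈ range (n + 1),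
      (risingFactorial (α + 1/2) (n - k) / (Nat.factorial (n - k) : ℝ))
        * (∑ m ∈ range (k + 1),
          risingFactorial (1/2) (k - m) / ((Nat.factorial (k - m)) : ℝ)
            * (x ^ m / ((Nat.factorial m) : ℝ)))
      = ∑ m ∈ range (k + 1),
          (risingFactorial (α + 1/2) (n - k) / (Nat.factorial (n - k) : ℝ))
            * (risingFactorial (1/2) (k - m) / ((Nat.factorial (k - m)) : ℝ)
              * (x ^ m / ((Nat.factorial m) : ℝ))) := by
    intro k _
    rw [Finset.mul_sum]
  rw [Finset.sum_congr rfl hR,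
    tri (fun k m => (risingFactorial (α + 1/2) (n - k) / (Nat.factorial (n - k) : ℝ))
      * (risingFactorial (1/2) (k - m) / ((Nat.factorial (k - m)) : ℝ)
        * (x ^ m / ((Nat.factorial m) : ℝ)))) n]
  apply Finset.sum_congr rfl
  intro m hm
  rw [mem_range] at hm
  have hm' : m ≤ n := by omega
  have e1 : n + 1 - m = (n - m) + 1 := by omega
  rw [e1]
  have e2 : ∀ i ∈ range ((n - m) + 1),
      (fun (k m' : ℕ) => (risingFactorial (α + 1/2) (n - k) / (Nat.factorial (n - k) : ℝ))
        * (risingFactorial (1/2) (k - m') / ((Nat.factorial (k - m')) : ℝ)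
          * (x ^ m' / ((Nat.factorial m') : ℝ)))) (m + i) m
      = (x ^ m / ((Nat.factorial m) : ℝ))
        * ((risingFactorial (1/2 : ℝ) i / (Nat.factorial i : ℝ))
          * (risingFactorial (α + 1/2) ((n - m) - i) / (Nat.factorial ((n - m) - i) : ℝ))) := by
    intro i hi
    beta_reduce
    have e3 : m + i - m = i := by omega
    have e4 : n - (m + i) = (n - m) - i := by omega
    rw [e3, e4]
    ring
  rw [Finset.sum_congr rfl e2, ← Finset.mul_sum, vandC (1/2) (α + 1/2) (n - m)]
  have e5 : ((1:ℝ)/2) + (α + 1/2) = α + 1 := by ring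
  rw [e5]
  ring


end LSaux

open LSaux Finset in
/-- The Lewandowski–Szynal inequality for Laguerre polynomials. -/
theorem lewandowski_szynal_inequality (α : ℝ) (hα : -(1 / 2) ≤ α) (x : ℝ) (hx : 0 ≤ x)
    (n : ℕ) :
    |laguerreP n α x| ≤
        risingFactorial (α + 1) n / (Nat.factorial n : ℝ) *
          ((Nat.factorial n : ℝ) / risingFactorial (α + 1) n *
            ∑ m ∈ Finset.range (n + 1),
              risingFactorial (α + 1) (n - m) / (Nat.factorial (n - m) : ℝ) *
                (x ^ m / (Nat.factorial m : ℝ))) ∧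
      |laguerreP n α x| ≤
        ∑ m ∈ Finset.range (n + 1),
          risingFactorial (α + 1) (n - m) / (Nat.factorial (n - m) : ℝ) *
            (x ^ m / (Nat.factorial m : ℝ)) := by
  have hα1 : 0 < α + 1 := by linarith
  have hαh : 0 ≤ α + 1/2 := by linarith
  have h2 : |laguerreP n α x| ≤
      ∑ m ∈ Finset.range (n + 1),
        risingFactorial (α + 1) (n - m) / (Nat.factorial (n - m) : ℝ) *
          (x ^ m / (Nat.factorial m : ℝ)) := by
    rw [connection n α hα1 x]
    calc |∑ k ∈ range (n + 1),
          risingFactorial (α + 1/2) (n - k) / (Nat.factorial (n - k) : ℝ)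
            * laguerreP k (-(1/2)) x|
        ≤ ∑ k ∈ range (n + 1),
          |risingFactorial (α + 1/2) (n - k) / (Nat.factorial (n - k) : ℝ)
            * laguerreP k (-(1/2)) x| := Finset.abs_sum_le_sum_abs _ _
      _ ≤ ∑ k ∈ range (n + 1),
          (risingFactorial (α + 1/2) (n - k) / (Nat.factorial (n - k) : ℝ))
            * (∑ m ∈ range (k + 1),
              risingFactorial (1/2) (k - m) / ((Nat.factorial (k - m)) : ℝ)
                * (x ^ m / ((Nat.factorial m) : ℝ))) := by
          apply Finset.sum_le_sum
          intro k _
          rw [abs_mul]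
          have hc : 0 ≤ risingFactorial (α + 1/2) (n - k) / (Nat.factorial (n - k) : ℝ) := by
            apply div_nonneg (rf_nonneg hαh _)
            positivity
          rw [abs_of_nonneg hc]
          exact mul_le_mul_of_nonneg_left (base k x hx) hc
      _ = _ := G2 n α x
  refine ⟨?_, h2⟩
  have hrf : risingFactorial (α + 1) n ≠ 0 := ne_of_gt (rf_pos hα1 n)
  have hnf : (Nat.factorial n : ℝ) ≠ 0 := by positivity
  have he : risingFactorial (α + 1) n / (Nat.factorial n : ℝ) *
      ((Nat.factorial n : ℝ) / risingFactorial (α + 1) n *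
        ∑ m ∈ Finset.range (n + 1),
          risingFactorial (α + 1) (n - m) / (Nat.factorial (n - m) : ℝ) *
            (x ^ m / (Nat.factorial m : ℝ)))
      = ∑ m ∈ Finset.range (n + 1),
          risingFactorial (α + 1) (n - m) / (Nat.factorial (n - m) : ℝ) *
            (x ^ m / (Nat.factorial m : ℝ)) := by
    field_simp
  rw [he]
  exact h2
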